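/- Suppose c ≠ 0 and let n₀ be the smallest index n with c_n ≠ 0. Let M : [0,∞) → ℝ satisfy M(t)/t → 0 as t → ∞. Define u(t) = Σ_{n≥1} exp(−λ_n t + ∫_0^t [α(r(s)) − (1/2)β(r(s))²] ds + M(t)) c_n e_n for t ≥ 0. Then lim_{t→∞} (1/t) log ‖u(t)‖ = −(λ_{n₀} − Σ_{j=1}^N π_j (α_j − (1/2)β_j²)). In particular, ‖u(t)‖ converges exponentially to zero if and only if λ_{n₀} > Σ_{j=1}^N π_j (α_j − (1/2)β_j²). -/

import Mathlib

open Filter MeasureTheory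
open scoped BigOperators ENNReal

lemma aux_norm_tsum_sq {H : Type*} [NormedAddCommGroup H] [InnerProductSpace ℝ H]
    [CompleteSpace H] (b : HilbertBasis ℕ ℝ H) (a : ℕ → ℝ)
    (ha : Summable fun n => a n ^ 2) :
    ‖∑' n, a n • (b n : H)‖ ^ 2 = ∑' n, a n ^ 2 := by
  have h2 : ((2 : ℝ≥0∞).toReal) = (2 : ℝ) := by simp
  have hmem : Memℓp a 2 := memℓp_gen (by
    rw [h2]
    simpa [Real.norm_eq_abs, Real.rpow_natCast, sq_abs] using ha)
  set v : lp (fun _ : ℕ => ℝ) 2 := ⟨a, hmem⟩ with hv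
  have hs : HasSum (fun n => a n • (b n : H)) (b.repr.symm v) :=
    b.hasSum_repr_symm v
  rw [hs.tsum_eq, LinearIsometryEquiv.norm_map]
  have h3 := lp.norm_rpow_eq_tsum (p := 2) (by simp) v
  rw [h2, show (2:ℝ) = ((2:ℕ):ℝ) by norm_num] at h3
  simp only [Real.rpow_natCast] at h3
  rw [h3]
  congr 1
  ext n
  simp [hv, Real.norm_eq_abs, sq_abs]

lemma aux_occ {N : ℕ} (r : ℝ → Fin N) (hr : Measurable r)
    (g : Fin N → ℝ) (pp : Fin N → ℝ)
    (hocc : ∀ i, Tendsto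
      (fun t : ℝ => (1 / t) * ∫ s in (0:ℝ)..t, (if r s = i then (1:ℝ) else 0))
      atTop (nhds (pp i))) :
    Tendsto (fun t : ℝ => (1 / t) * ∫ s in (0:ℝ)..t, g (r s)) atTop
      (nhds (∑ i, pp i * g i)) := by
  have hind : ∀ (i : Fin N) (t : ℝ),
      IntervalIntegrable (fun s => if r s = i then (1:ℝ) else 0) volume 0 t := by
    intro i t
    have hm : Measurable (fun s => if r s = i then (1:ℝ) else 0) :=
      Measurable.ite (hr (measurableSet_singleton i)) measurable_const measurable_const
    refine (intervalIntegrable_const (c := (1:ℝ))).mono_fun hm.aestronglyMeasurable ?_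
    filter_upwards with s
    by_cases h : r s = i <;> simp [h]
  have hkey : ∀ t : ℝ, (∫ s in (0:ℝ)..t, g (r s))
      = ∑ i, (∫ s in (0:ℝ)..t, (if r s = i then (1:ℝ) else 0)) * g i := by
    intro t
    have hpt : ∀ s : ℝ, g (r s) = ∑ i, (if r s = i then (1:ℝ) else 0) * g i := by
      intro s
      simp [ite_mul, Finset.sum_ite_eq]
    calc (∫ s in (0:ℝ)..t, g (r s))
        = ∫ s in (0:ℝ)..t, ∑ i, (if r s = i then (1:ℝ) else 0) * g i := by
          simp_rw [← hpt]
      _ = ∑ i, ∫ s in (0:ℝ)..t, (if r s = i then (1:ℝ) else 0) * g i :=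
          intervalIntegral.integral_finset_sum (fun i _ => (hind i t).mul_const (g i))
      _ = ∑ i, (∫ s in (0:ℝ)..t, (if r s = i then (1:ℝ) else 0)) * g i := by
          simp_rw [intervalIntegral.integral_mul_const]
  have hsum : Tendsto
      (fun t : ℝ => ∑ i, ((1 / t) * ∫ s in (0:ℝ)..t, (if r s = i then (1:ℝ) else 0)) * g i)
      atTop (nhds (∑ i, pp i * g i)) :=
    tendsto_finset_sum _ (fun i _ => (hocc i).mul_const (g i))
  refine hsum.congr (fun t => ?_)
  rw [hkey t, Finset.mul_sum]
  exact Finset.sum_congr rfl fun i _ => by ring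

theorem sample_lyapunov_exponent_hybrid
    {H : Type*} [NormedAddCommGroup H] [InnerProductSpace ℝ H] [CompleteSpace H]
    (b : HilbertBasis ℕ ℝ H)
    (lam : ℕ → ℝ) (hlam : Monotone lam)
    (c : ℕ → ℝ) (hc : Summable (fun n => c n ^ 2)) (hc0 : c ≠ 0)
    (n₀ : ℕ) (hn₀ : c n₀ ≠ 0) (hn₀min : ∀ m, m < n₀ → c m = 0)
    {N : ℕ} (r : ℝ → Fin N) (hr : Measurable r)
    (α β : Fin N → ℝ)
    (pp : Fin N → ℝ) (hpp : ∀ i, 0 ≤ pp i) (hppsum : ∑ i, pp i = 1)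
    (hocc : ∀ i, Tendsto
      (fun t : ℝ => (1 / t) * ∫ s in (0:ℝ)..t, (if r s = i then (1:ℝ) else 0))
      atTop (nhds (pp i)))
    (M : ℝ → ℝ) (hM : Tendsto (fun t : ℝ => M t / t) atTop (nhds 0))
    (u : ℝ → H)
    (hu : ∀ t : ℝ, u t =
      ∑' n : ℕ, (Real.exp (-lam n * t +
        (∫ s in (0:ℝ)..t, (α (r s) - (1 / 2) * β (r s) ^ 2)) + M t) * c n) • (b n : H)) :
    Tendsto (fun t : ℝ => (1 / t) * Real.log ‖u t‖) atTop
        (nhds (-(lam n₀ - ∑ j, pp j * (α j - (1 / 2) * β j ^ 2)))) ∧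
    ((∃ γ > (0:ℝ), ∃ C : ℝ, ∀ᶠ t in atTop, ‖u t‖ ≤ C * Real.exp (-γ * t)) ↔
      ∑ j, pp j * (α j - (1 / 2) * β j ^ 2) < lam n₀) := by
  classical
  set K : ℝ := ∑ j, pp j * (α j - (1 / 2) * β j ^ 2) with hKdef
  set D : ℝ → ℝ :=
    fun t => (∫ s in (0:ℝ)..t, (α (r s) - (1 / 2) * β (r s) ^ 2)) + M t with hDdef
  -- rewrite u
  have hu' : ∀ t : ℝ, u t
      = ∑' n : ℕ, (Real.exp (-lam n * t + D t) * c n) • (b n : H) := by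
    intro t
    rw [hu t]
    congr 1
    ext n
    rw [hDdef, add_assoc]
  -- limit of (1/t) * D t
  have hDlim : Tendsto (fun t : ℝ => (1 / t) * D t) atTop (nhds K) := by
    have h1 := aux_occ r hr (fun i => α i - (1 / 2) * β i ^ 2) pp hocc
    have h2 : Tendsto (fun t : ℝ => (1 / t) * M t) atTop (nhds 0) :=
      hM.congr (fun t => by rw [div_eq_mul_inv, mul_comm, one_div])
    have h3 := h1.add h2
    rw [add_zero] at h3
    refine Tendsto.congr (fun t => ?_) h3
    rw [hDdef]
    ring
  -- termwise bound
  have hterm : ∀ t : ℝ, 0 ≤ t → ∀ m n : ℕ, m ≤ n →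
      (Real.exp (-lam n * t + D t) * c n) ^ 2
        ≤ (Real.exp (-lam m * t + D t)) ^ 2 * c n ^ 2 := by
    intro t ht m n hmn
    rw [mul_pow]
    refine mul_le_mul_of_nonneg_right ?_ (sq_nonneg _)
    refine pow_le_pow_left₀ (Real.exp_nonneg _) ?_ 2
    refine Real.exp_le_exp.2 ?_
    have := hlam hmn
    nlinarith
  have hsumm : ∀ t : ℝ, 0 ≤ t →
      Summable (fun n => (Real.exp (-lam n * t + D t) * c n) ^ 2) := by
    intro t ht
    exact Summable.of_nonneg_of_le (fun n => sq_nonneg _)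
      (fun n => hterm t ht 0 n (Nat.zero_le n)) (hc.mul_left _)
  have hnorm : ∀ t : ℝ, 0 ≤ t →
      ‖u t‖ ^ 2 = ∑' n, (Real.exp (-lam n * t + D t) * c n) ^ 2 := by
    intro t ht
    rw [hu' t]
    exact aux_norm_tsum_sq b _ (hsumm t ht)
  have hcpos : (0:ℝ) < c n₀ ^ 2 := by positivity
  have hCsum : (0:ℝ) < ∑' n, c n ^ 2 :=
    lt_of_lt_of_le hcpos (hc.le_tsum n₀ (fun m _ => sq_nonneg _))
  -- lower bound on the norm
  have hlow : ∀ t : ℝ, 0 ≤ t →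
      Real.exp (-lam n₀ * t + D t) * |c n₀| ≤ ‖u t‖ := by
    intro t ht
    have h1 : (Real.exp (-lam n₀ * t + D t) * |c n₀|) ^ 2 ≤ ‖u t‖ ^ 2 := by
      rw [hnorm t ht, mul_pow, sq_abs, ← mul_pow]
      exact (hsumm t ht).le_tsum n₀ (fun m _ => sq_nonneg _)
    have h2 := Real.sqrt_le_sqrt h1
    rwa [Real.sqrt_sq (by positivity), Real.sqrt_sq (norm_nonneg _)] at h2
  -- upper bound on the norm
  have hupp : ∀ t : ℝ, 0 ≤ t →
      ‖u t‖ ≤ Real.exp (-lam n₀ * t + D t) * Real.sqrt (∑' n, c n ^ 2) := by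
    intro t ht
    have h1 : ‖u t‖ ^ 2 ≤ (Real.exp (-lam n₀ * t + D t)) ^ 2 * ∑' n, c n ^ 2 := by
      rw [hnorm t ht, ← tsum_mul_left]
      refine Summable.tsum_le_tsum (fun n => ?_) (hsumm t ht) (hc.mul_left _)
      rcases lt_or_ge n n₀ with h | h
      · simp [hn₀min n h]
      · exact hterm t ht n₀ n h
    have h2 := Real.sqrt_le_sqrt h1
    rwa [Real.sqrt_sq (norm_nonneg _), Real.sqrt_mul (sq_nonneg _),
      Real.sqrt_sq (Real.exp_nonneg _)] at h2
  have habs : (0:ℝ) < |c n₀| := abs_pos.2 hn₀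
  have hpos : ∀ t : ℝ, 0 ≤ t → 0 < ‖u t‖ := by
    intro t ht
    exact lt_of_lt_of_le (by positivity) (hlow t ht)
  -- log bounds
  have hlog_low : ∀ t : ℝ, 0 ≤ t →
      (-lam n₀ * t + D t) + Real.log |c n₀| ≤ Real.log ‖u t‖ := by
    intro t ht
    have := Real.log_le_log (by positivity) (hlow t ht)
    rwa [Real.log_mul (Real.exp_ne_zero _) (ne_of_gt habs), Real.log_exp] at this
  have hlog_up : ∀ t : ℝ, 0 ≤ t →
      Real.log ‖u t‖ ≤ (-lam n₀ * t + D t) + Real.log (Real.sqrt (∑' n, c n ^ 2)) := by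
    intro t ht
    have := Real.log_le_log (hpos t ht) (hupp t ht)
    rwa [Real.log_mul (Real.exp_ne_zero _) (ne_of_gt (Real.sqrt_pos.2 hCsum)),
      Real.log_exp] at this
  -- generic edge limit
  have hedge : ∀ C0 : ℝ, Tendsto (fun t : ℝ => (1 / t) * ((-lam n₀ * t + D t) + C0))
      atTop (nhds (-lam n₀ + K)) := by
    intro C0
    have h2 : Tendsto (fun t : ℝ => 1 / t) atTop (nhds (0:ℝ)) := by
      simpa [one_div] using (tendsto_inv_atTop_zero (𝕜 := ℝ))
    have h3 := ((tendsto_const_nhds (x := -lam n₀) (f := atTop)).add hDlim).add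
      (h2.mul_const C0)
    rw [zero_mul, add_zero] at h3
    refine h3.congr' ?_
    filter_upwards [eventually_gt_atTop (0:ℝ)] with t ht
    field_simp
  have hmain : Tendsto (fun t : ℝ => (1 / t) * Real.log ‖u t‖) atTop
      (nhds (-lam n₀ + K)) := by
    refine tendsto_of_tendsto_of_tendsto_of_le_of_le'
      (hedge (Real.log |c n₀|)) (hedge (Real.log (Real.sqrt (∑' n, c n ^ 2)))) ?_ ?_
    · filter_upwards [eventually_ge_atTop (0:ℝ)] with t ht
      exact mul_le_mul_of_nonneg_left (hlog_low t ht) (by positivity)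
    · filter_upwards [eventually_ge_atTop (0:ℝ)] with t ht
      exact mul_le_mul_of_nonneg_left (hlog_up t ht) (by positivity)
  have hKL : -(lam n₀ - K) = -lam n₀ + K := by ring
  constructor
  · rw [hKL]; exact hmain
  constructor
  · rintro ⟨γ, hγ, C, hev⟩
    -- C must be positive
    obtain ⟨t₁, hbd₁, ht₁⟩ := (hev.and (eventually_ge_atTop (0:ℝ))).exists
    have hCpos : 0 < C := by
      have h0 := lt_of_lt_of_le (hpos t₁ ht₁) hbd₁
      nlinarith [Real.exp_pos (-γ * t₁)]
    have hub : ∀ᶠ t in atTop, (1 / t) * Real.log ‖u t‖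
        ≤ (1 / t) * Real.log C + (-γ) := by
      filter_upwards [hev, eventually_gt_atTop (0:ℝ)] with t hbd ht
      have hlg := Real.log_le_log (hpos t ht.le) hbd
      rw [Real.log_mul (ne_of_gt hCpos) (Real.exp_ne_zero _), Real.log_exp] at hlg
      have := mul_le_mul_of_nonneg_left hlg (le_of_lt (by positivity : (0:ℝ) < 1 / t))
      calc (1 / t) * Real.log ‖u t‖ ≤ (1 / t) * (Real.log C + -γ * t) := this
        _ = (1 / t) * Real.log C + (-γ) := by field_simp
    have hlim2 : Tendsto (fun t : ℝ => (1 / t) * Real.log C + (-γ)) atTop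
        (nhds (-γ)) := by
      have h2 : Tendsto (fun t : ℝ => 1 / t) atTop (nhds (0:ℝ)) := by
        simpa [one_div] using (tendsto_inv_atTop_zero (𝕜 := ℝ))
      have := (h2.mul_const (Real.log C)).add (tendsto_const_nhds (x := -γ))
      simpa using this
    have hle : -lam n₀ + K ≤ -γ := le_of_tendsto_of_tendsto hmain hlim2 hub
    linarith
  · intro hKlt
    have hLneg : -lam n₀ + K < 0 := by linarith
    refine ⟨-(-lam n₀ + K) / 2, by linarith, 1, ?_⟩
    have hev := hmain.eventually (gt_mem_nhds
      (show -lam n₀ + K < (-lam n₀ + K) / 2 by linarith))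
    filter_upwards [hev, eventually_gt_atTop (0:ℝ)] with t hlt ht
    have h1 : Real.log ‖u t‖ < ((-lam n₀ + K) / 2) * t := by
      have := (mul_lt_mul_iff_of_pos_right ht).2 hlt
      calc Real.log ‖u t‖ = ((1 / t) * Real.log ‖u t‖) * t := by field_simp
        _ < ((-lam n₀ + K) / 2) * t := this
    have h2 : ‖u t‖ = Real.exp (Real.log ‖u t‖) := (Real.exp_log (hpos t ht.le)).symm
    rw [h2, one_mul]
    exact le_of_lt (by
      apply Real.exp_lt_exp.2
      calc Real.log ‖u t‖ < ((-lam n₀ + K) / 2) * t := h1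
        _ = -(-(-lam n₀ + K) / 2) * t := by ring)
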